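/- (Lemma 1, Dirac-free formulation.) Fix a polar angle φ ∈ (0, π/2] and assume α ≠ β or α < 0. For every continuous function g : ℝ → ℝ, the change-of-variables identity ∫_{0}^{π/2} g(M_φ(θ)) dθ = ∫_{ℝ} g(σ) · μ_φ(σ − γ) / √(α²+β² − (σ−γ)²) dσ holds, where the integrand on the right-hand side is interpreted as 0 whenever μ_φ(σ − γ) = 0. -/

import Mathlib

open Real Set MeasureTheory

lemma piece_change (M M' fs g : ℝ → ℝ) (a b : ℝ) (hab : a ≤ b)
    (hg : Continuous g) (hM : Continuous M)
    (hd : ∀ θ ∈ Ioo a b, HasDerivWithinAt M (M' θ) (Ioo a b) θ)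
    (hinj : InjOn M (Ioo a b))
    (heq : ∀ θ ∈ Ioo a b, |M' θ| * fs (M θ) = g (M θ)) :
    (∫ θ in a..b, g (M θ)) = (∫ σ in M '' Ioo a b, fs σ) ∧
      IntegrableOn fs (M '' Ioo a b) := by
  have hmeas : MeasurableSet (Ioo a b) := measurableSet_Ioo
  have h1 := integral_image_eq_integral_abs_deriv_smul hmeas hd hinj fs
  have h2 := integrableOn_image_iff_integrableOn_abs_deriv_smul hmeas hd hinj fs
  have hint : IntegrableOn (fun θ => g (M θ)) (Ioo a b) :=
    ((hg.comp hM).integrableOn_Icc).mono_set Ioo_subset_Icc_self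
  constructor
  · rw [intervalIntegral.integral_of_le hab, MeasureTheory.integral_Ioc_eq_integral_Ioo, h1]
    exact (setIntegral_congr_fun hmeas (fun θ hθ => by
      simp only [smul_eq_mul]; exact (heq θ hθ).symm))
  · rw [h2]
    exact hint.congr_fun (fun θ hθ => by
      simp only [smul_eq_mul]; exact (heq θ hθ).symm) hmeas

/-- Lemma 1, Dirac-free formulation: change of variables from the
angle integral to the damping-density integral for a fixed polar angle `φ`. -/
theorem horizontal_damping_density_change_of_variables
    (Lx Ly Lz rx0 rx1 ry0 ry1 rz0 rz1 V Kx Ky Kz : ℝ)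
    (hLx : 0 < Lx) (hLy : 0 < Ly) (hLz : 0 < Lz)
    (hrx0 : rx0 ∈ Set.Ioo (0 : ℝ) 1) (hrx1 : rx1 ∈ Set.Ioo (0 : ℝ) 1)
    (hry0 : ry0 ∈ Set.Ioo (0 : ℝ) 1) (hry1 : ry1 ∈ Set.Ioo (0 : ℝ) 1)
    (hrz0 : rz0 ∈ Set.Ioo (0 : ℝ) 1) (hrz1 : rz1 ∈ Set.Ioo (0 : ℝ) 1)
    (hV : V = Lx * Ly * Lz)
    (hKx : Kx = Real.log (rx0 * rx1) / Lx)
    (hKy : Ky = Real.log (ry0 * ry1) / Ly)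
    (hKz : Kz = Real.log (rz0 * rz1) / Lz)
    (φ : ℝ) (hφ : φ ∈ Set.Ioc (0 : ℝ) (π / 2))
    (α β γ φ₀ : ℝ)
    (hα : α = Kx * Real.sin φ) (hβ : β = Ky * Real.sin φ) (hγ : γ = Kz * Real.cos φ)
    (hφ₀ : φ₀ = Real.arctan (-Ky / Kx))
    (Mφ : ℝ → ℝ)
    (hMφ : ∀ θ, Mφ θ = -Real.sqrt (α ^ 2 + β ^ 2) * Real.cos (θ + φ₀) + γ)
    (μφ : ℝ → ℝ)
    (hμφ : ∀ x, μφ x =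
      Set.indicator (Set.Icc (-Real.sqrt (α ^ 2 + β ^ 2)) β) (fun _ => (1 : ℝ)) x +
        Set.indicator (Set.Icc (-Real.sqrt (α ^ 2 + β ^ 2)) α) (fun _ => (1 : ℝ)) x)
    (hαβ : α ≠ β ∨ α < 0) :
    ∀ g : ℝ → ℝ, Continuous g →
      (∫ θ in (0 : ℝ)..(π / 2), g (Mφ θ)) =
        ∫ σ : ℝ, g σ * μφ (σ - γ) / Real.sqrt (α ^ 2 + β ^ 2 - (σ - γ) ^ 2) := by
  intro g hg
  -- basic sign facts
  have hKx0 : Kx < 0 := by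
    rw [hKx]
    apply div_neg_of_neg_of_pos _ hLx
    exact Real.log_neg (mul_pos hrx0.1 hrx1.1) (by nlinarith [hrx0.1, hrx0.2, hrx1.1, hrx1.2])
  have hKy0 : Ky < 0 := by
    rw [hKy]
    apply div_neg_of_neg_of_pos _ hLy
    exact Real.log_neg (mul_pos hry0.1 hry1.1) (by nlinarith [hry0.1, hry0.2, hry1.1, hry1.2])
  have hsinφ : 0 < Real.sin φ :=
    Real.sin_pos_of_pos_of_lt_pi hφ.1 (lt_of_le_of_lt hφ.2 (by linarith [Real.pi_pos]))
  have hα0 : α < 0 := by rw [hα]; exact mul_neg_of_neg_of_pos hKx0 hsinφ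
  have hβ0 : β < 0 := by rw [hβ]; exact mul_neg_of_neg_of_pos hKy0 hsinφ
  set R := Real.sqrt (α ^ 2 + β ^ 2) with hRdef
  have hab0 : (0:ℝ) < α ^ 2 + β ^ 2 := by nlinarith
  have hsq : R ^ 2 = α ^ 2 + β ^ 2 := Real.sq_sqrt hab0.le
  have hR0 : 0 < R := Real.sqrt_pos.2 hab0
  have hRα : -R < α := by
    have : -α < R := by
      rw [hRdef]
      calc -α = Real.sqrt (α ^ 2) := by
            rw [Real.sqrt_sq_eq_abs, abs_of_neg hα0]
        _ < Real.sqrt (α ^ 2 + β ^ 2) := Real.sqrt_lt_sqrt (by positivity) (by nlinarith)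
    linarith
  have hRβ : -R < β := by
    have : -β < R := by
      rw [hRdef]
      calc -β = Real.sqrt (β ^ 2) := by
            rw [Real.sqrt_sq_eq_abs, abs_of_neg hβ0]
        _ < Real.sqrt (α ^ 2 + β ^ 2) := Real.sqrt_lt_sqrt (by positivity) (by nlinarith)
    linarith
  -- φ₀ facts
  have ht0 : -Ky / Kx < 0 := div_neg_of_pos_of_neg (by linarith) hKx0
  have hφ₀neg : φ₀ < 0 := by
    rw [hφ₀, ← Real.arctan_zero]
    exact Real.arctan_strictMono ht0
  have hφ₀lb : -(π / 2) < φ₀ := by rw [hφ₀]; exact Real.neg_pi_div_two_lt_arctan _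
  have hcosφ₀pos : 0 < Real.cos φ₀ := by
    rw [hφ₀]; exact Real.cos_arctan_pos _
  have hcosφ₀ : R * Real.cos φ₀ = -α := by
    have h1 : (R * Real.cos φ₀) ^ 2 = α ^ 2 := by
      rw [hφ₀, Real.cos_arctan]
      have hx2 : (0:ℝ) < 1 + (-Ky / Kx) ^ 2 := by positivity
      rw [mul_pow, hsq, div_pow, one_pow, Real.sq_sqrt hx2.le]
      rw [hα, hβ]
      have hKxne : Kx ≠ 0 := ne_of_lt hKx0
      field_simp
    have h2 : 0 ≤ R * Real.cos φ₀ := by positivity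
    calc R * Real.cos φ₀ = Real.sqrt ((R * Real.cos φ₀) ^ 2) := (Real.sqrt_sq h2).symm
      _ = Real.sqrt (α ^ 2) := by rw [h1]
      _ = -α := by rw [Real.sqrt_sq_eq_abs, abs_of_neg hα0]
  have hsinφ₀ : R * Real.sin φ₀ = β := by
    have htan : Real.tan φ₀ = -Ky / Kx := by rw [hφ₀, Real.tan_arctan]
    have hsin : Real.sin φ₀ = (-Ky / Kx) * Real.cos φ₀ := by
      rw [← htan, Real.tan_eq_sin_div_cos, div_mul_cancel₀ _ (ne_of_gt hcosφ₀pos)]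
    rw [hsin]
    have hKxne : Kx ≠ 0 := ne_of_lt hKx0
    have : R * ((-Ky / Kx) * Real.cos φ₀) = (-Ky / Kx) * (R * Real.cos φ₀) := by ring
    rw [this, hcosφ₀, hα, hβ]
    field_simp
  -- M values and derivative
  have hMfun : Mφ = fun θ => -R * Real.cos (θ + φ₀) + γ := funext hMφ
  have hM0 : Mφ 0 = γ + α := by
    rw [hMφ 0, zero_add]; linarith [hcosφ₀]
  have hMmid : Mφ (-φ₀) = γ - R := by
    rw [hMφ (-φ₀), neg_add_cancel, Real.cos_zero]; ring
  have hMend : Mφ (π / 2) = γ + β := by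
    rw [hMφ (π / 2), Real.cos_add, Real.cos_pi_div_two, Real.sin_pi_div_two]
    have h9 : -R * (0 * Real.cos φ₀ - 1 * Real.sin φ₀) = R * Real.sin φ₀ := by ring
    rw [h9, hsinφ₀]; ring
  have hMcont : Continuous Mφ := by
    rw [hMfun]
    exact (continuous_const.mul
      (Real.continuous_cos.comp (continuous_id.add continuous_const))).add continuous_const
  have hderiv : ∀ θ : ℝ, HasDerivAt Mφ (R * Real.sin (θ + φ₀)) θ := by
    intro θ
    rw [hMfun]
    have h1 : HasDerivAt (fun θ : ℝ => θ + φ₀) 1 θ := (hasDerivAt_id θ).add_const φ₀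
    have h2 := ((h1.cos).const_mul (-R)).add_const γ
    rw [show R * Real.sin (θ + φ₀) = -R * (-Real.sin (θ + φ₀) * 1) by ring]
    exact h2
  -- sqrt identity
  have hsqrt : ∀ θ : ℝ, Real.sqrt (α ^ 2 + β ^ 2 - (Mφ θ - γ) ^ 2)
      = |R * Real.sin (θ + φ₀)| := by
    intro θ
    have hpyth := Real.sin_sq_add_cos_sq (θ + φ₀)
    have : α ^ 2 + β ^ 2 - (Mφ θ - γ) ^ 2 = (R * Real.sin (θ + φ₀)) ^ 2 := by
      rw [hMφ θ, ← hsq]; linear_combination (-(R ^ 2)) * hpyth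
    rw [this, Real.sqrt_sq_eq_abs]
  -- the singular density
  set fs : ℝ → ℝ := fun σ => g σ / Real.sqrt (α ^ 2 + β ^ 2 - (σ - γ) ^ 2) with hfs
  have hkey : ∀ θ : ℝ, Real.sin (θ + φ₀) ≠ 0 → |R * Real.sin (θ + φ₀)| * fs (Mφ θ) = g (Mφ θ) := by
    intro θ hθ
    have hne : |R * Real.sin (θ + φ₀)| ≠ 0 := by
      simp [abs_eq_zero, ne_of_gt hR0, hθ]
    rw [hfs]
    simp only []
    rw [hsqrt θ]
    field_simp
  -- sin signs
  have hsin1 : ∀ θ ∈ Ioo (0:ℝ) (-φ₀), Real.sin (θ + φ₀) < 0 := by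
    intro θ hθ
    apply Real.sin_neg_of_neg_of_neg_pi_lt
    · linarith [hθ.2]
    · have := Real.pi_pos; linarith [hθ.1]
  have hsin2 : ∀ θ ∈ Ioo (-φ₀) (π / 2), 0 < Real.sin (θ + φ₀) := by
    intro θ hθ
    apply Real.sin_pos_of_pos_of_lt_pi
    · linarith [hθ.1]
    · have := Real.pi_pos; linarith [hθ.2]
  -- monotonicity
  have hanti : StrictAntiOn Mφ (Icc 0 (-φ₀)) := by
    apply strictAntiOn_of_deriv_neg (convex_Icc _ _) hMcont.continuousOn
    intro θ hθ
    rw [interior_Icc] at hθ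
    rw [(hderiv θ).deriv]
    exact mul_neg_of_pos_of_neg hR0 (hsin1 θ hθ)
  have hmono : StrictMonoOn Mφ (Icc (-φ₀) (π / 2)) := by
    apply strictMonoOn_of_deriv_pos (convex_Icc _ _) hMcont.continuousOn
    intro θ hθ
    rw [interior_Icc] at hθ
    rw [(hderiv θ).deriv]
    exact mul_pos hR0 (hsin2 θ hθ)
  have h0φ₀ : (0:ℝ) ≤ -φ₀ := by linarith
  have hφ₀π : -φ₀ ≤ π / 2 := by linarith
  -- images
  have himg1 : Mφ '' Ioo 0 (-φ₀) = Ioo (γ - R) (γ + α) := by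
    apply Subset.antisymm
    · have := hanti.image_Ioo_subset
      rwa [hMmid, hM0] at this
    · have := intermediate_value_Ioo' h0φ₀ hMcont.continuousOn
      rwa [hM0, hMmid] at this
  have himg2 : Mφ '' Ioo (-φ₀) (π / 2) = Ioo (γ - R) (γ + β) := by
    apply Subset.antisymm
    · have := hmono.image_Ioo_subset
      rwa [hMmid, hMend] at this
    · have := intermediate_value_Ioo hφ₀π hMcont.continuousOn
      rwa [hMmid, hMend] at this
  -- piece lemma applications
  have hp1 := piece_change Mφ (fun θ => R * Real.sin (θ + φ₀)) fs g 0 (-φ₀) h0φ₀ hg hMcont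
    (fun θ _ => (hderiv θ).hasDerivWithinAt)
    ((hanti.mono Ioo_subset_Icc_self).injOn)
    (fun θ hθ => hkey θ (ne_of_lt (hsin1 θ hθ)))
  have hp2 := piece_change Mφ (fun θ => R * Real.sin (θ + φ₀)) fs g (-φ₀) (π / 2) hφ₀π hg hMcont
    (fun θ _ => (hderiv θ).hasDerivWithinAt)
    ((hmono.mono Ioo_subset_Icc_self).injOn)
    (fun θ hθ => hkey θ (ne_of_gt (hsin2 θ hθ)))
  rw [himg1] at hp1
  rw [himg2] at hp2
  -- split LHS
  have hIcomp : ∀ a b : ℝ, IntervalIntegrable (fun θ => g (Mφ θ)) volume a b :=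
    fun a b => (hg.comp hMcont).intervalIntegrable a b
  have hsplit : (∫ θ in (0:ℝ)..(π / 2), g (Mφ θ))
      = (∫ θ in (0:ℝ)..(-φ₀), g (Mφ θ)) + ∫ θ in (-φ₀)..(π / 2), g (Mφ θ) :=
    (intervalIntegral.integral_add_adjacent_intervals (hIcomp 0 (-φ₀)) (hIcomp (-φ₀) (π/2))).symm
  -- RHS rewriting
  have hRHSfun : ∀ σ : ℝ, g σ * μφ (σ - γ) / Real.sqrt (α ^ 2 + β ^ 2 - (σ - γ) ^ 2)
      = Set.indicator (Icc (γ - R) (γ + β)) fs σ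
        + Set.indicator (Icc (γ - R) (γ + α)) fs σ := by
    intro σ
    rw [hμφ (σ - γ)]
    have hm1 : σ - γ ∈ Icc (-R) β ↔ σ ∈ Icc (γ - R) (γ + β) := by
      constructor <;> (intro h; constructor <;> [linarith [h.1]; linarith [h.2]])
    have hm2 : σ - γ ∈ Icc (-R) α ↔ σ ∈ Icc (γ - R) (γ + α) := by
      constructor <;> (intro h; constructor <;> [linarith [h.1]; linarith [h.2]])
    by_cases h1 : σ ∈ Icc (γ - R) (γ + β) <;> by_cases h2 : σ ∈ Icc (γ - R) (γ + α) <;>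
      simp [Set.indicator_apply, hm1, hm2, h1, h2, hfs] <;> ring
  -- integrability of pieces on closed intervals
  have hint1 : Integrable (Set.indicator (Icc (γ - R) (γ + α)) fs) := by
    rw [integrable_indicator_iff measurableSet_Icc]
    exact (integrableOn_Icc_iff_integrableOn_Ioo).2 hp1.2
  have hint2 : Integrable (Set.indicator (Icc (γ - R) (γ + β)) fs) := by
    rw [integrable_indicator_iff measurableSet_Icc]
    exact (integrableOn_Icc_iff_integrableOn_Ioo).2 hp2.2
  calc (∫ θ in (0:ℝ)..(π / 2), g (Mφ θ))
      = (∫ θ in (0:ℝ)..(-φ₀), g (Mφ θ)) + ∫ θ in (-φ₀)..(π / 2), g (Mφ θ) := hsplit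
    _ = (∫ σ in Ioo (γ - R) (γ + α), fs σ) + ∫ σ in Ioo (γ - R) (γ + β), fs σ := by
        rw [hp1.1, hp2.1]
    _ = (∫ σ : ℝ, Set.indicator (Icc (γ - R) (γ + β)) fs σ)
        + ∫ σ : ℝ, Set.indicator (Icc (γ - R) (γ + α)) fs σ := by
        rw [integral_indicator measurableSet_Icc, integral_indicator measurableSet_Icc,
          MeasureTheory.integral_Icc_eq_integral_Ioo, MeasureTheory.integral_Icc_eq_integral_Ioo]
        ring
    _ = ∫ σ : ℝ, (Set.indicator (Icc (γ - R) (γ + β)) fs σ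
        + Set.indicator (Icc (γ - R) (γ + α)) fs σ) := (integral_add hint2 hint1).symm
    _ = ∫ σ : ℝ, g σ * μφ (σ - γ) / Real.sqrt (α ^ 2 + β ^ 2 - (σ - γ) ^ 2) := by
        congr 1; funext σ; rw [hRHSfun σ]
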